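/- Let g : ℝ → ℝ be the translation g(t) = t + 1, and let C = ⋃_{n ∈ ℤ} (n + C₀), where C₀ is the standard middle-thirds Cantor set in [0,1]. There exists an increasing homeomorphism f : ℝ → ℝ with f(C) = C and f([n, n+1]) = [n+1, n+2] for every n ∈ ℤ, such that for the group G generated by f and g: the G-orbit of 0 equals ℤ, and there exists a point x₀ ∈ C₀ ∖ ℤ whose G-orbit is dense in C. -/

import Mathlib

open Set Topology Filter

/-- The `G`-orbit of `x ∈ ℝ` under a group of increasing homeomorphisms of `ℝ`
(= order isomorphisms of `ℝ`). -/
def orbitR (G : Subgroup (ℝ ≃o ℝ)) (x : ℝ) : Set ℝ := {y | ∃ g ∈ G, g x = y}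

/-- The standard middle-thirds Cantor set: points of `[0,1]` admitting a ternary expansion
using only the digits `0` and `2`. -/
def cantorC : Set ℝ :=
  {x | ∃ a : ℕ → ℕ, (∀ n, a n = 0 ∨ a n = 2) ∧ x = ∑' n, (a n : ℝ) / 3 ^ (n + 1)}

/-- `C = ⋃ₙ (n + C₀)`: a middle-thirds Cantor set in each interval `[n, n+1]`. -/
def CZ : Set ℝ := ⋃ n : ℤ, (fun t => (n : ℝ) + t) '' cantorC


noncomputable section

def phiF (x : ℝ) : ℝ :=
  if x ≤ 0 then x else if x ≤ 2/3 then x/3 else if x ≤ 7/9 then x - 4/9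
  else if x ≤ 1 then 3*x - 2 else x

def phiG (x : ℝ) : ℝ :=
  if x ≤ 0 then x else if x ≤ 2/9 then 3*x else if x ≤ 1/3 then x + 4/9
  else if x ≤ 1 then (x+2)/3 else x

lemma phiF_mono : StrictMono phiF := by
  intro x y h; unfold phiF; split_ifs <;> linarith

lemma phiF_right : Function.RightInverse phiG phiF := by
  intro x; unfold phiF phiG; split_ifs <;> linarith

def phi : ℝ ≃o ℝ := StrictMono.orderIsoOfRightInverse phiF phiF_mono phiG phiF_right

lemma phi_apply (x : ℝ) : phi x = phiF x := rfl
lemma phi_symm_apply (x : ℝ) : phi.symm x = phiG x := rfl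

def sigF (x : ℝ) : ℝ := x/3 + 2/3
def sigG (x : ℝ) : ℝ := 3*x - 2

lemma sigF_mono : StrictMono sigF := by intro x y h; unfold sigF; linarith
lemma sigF_right : Function.RightInverse sigG sigF := by intro x; unfold sigF sigG; ring

def sig : ℝ ≃o ℝ := StrictMono.orderIsoOfRightInverse sigF sigF_mono sigG sigF_right

def psi : ℝ ≃o ℝ := (sig.symm.trans phi).trans sig

lemma psi_apply (x : ℝ) : psi x = sigF (phiF (sigG x)) := rfl
lemma psi_symm_apply (x : ℝ) : psi.symm x = sigF (phiG (sigG x)) := by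
  apply psi.injective
  rw [psi.apply_symm_apply, psi_apply]
  unfold sigF sigG
  have : 3 * (phiG (3*x-2) / 3 + 2/3) - 2 = phiG (3*x-2) := by ring
  rw [this, phiF_right]
  ring

-- evaluation lemmas
lemma phi_lo {x : ℝ} (h0 : 0 ≤ x) (h1 : x ≤ 2/3) : phi x = x/3 := by
  rw [phi_apply]; unfold phiF; split_ifs <;> linarith
lemma phi_mid {x : ℝ} (h0 : 2/3 ≤ x) (h1 : x ≤ 7/9) : phi x = x - 4/9 := by
  rw [phi_apply]; unfold phiF; split_ifs <;> linarith
lemma phi_hi {x : ℝ} (h0 : 7/9 ≤ x) (h1 : x ≤ 1) : phi x = 3*x - 2 := by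
  rw [phi_apply]; unfold phiF; split_ifs <;> linarith
lemma phi_id_lo {x : ℝ} (h : x ≤ 0) : phi x = x := by
  rw [phi_apply]; unfold phiF; split_ifs <;> linarith
lemma phi_id_hi {x : ℝ} (h : 1 ≤ x) : phi x = x := by
  rw [phi_apply]; unfold phiF; split_ifs <;> linarith
lemma phiI_lo {x : ℝ} (h0 : 0 ≤ x) (h1 : x ≤ 2/9) : phi.symm x = 3*x := by
  rw [phi_symm_apply]; unfold phiG; split_ifs <;> linarith
lemma phiI_mid {x : ℝ} (h0 : 2/9 ≤ x) (h1 : x ≤ 1/3) : phi.symm x = x + 4/9 := by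
  rw [phi_symm_apply]; unfold phiG; split_ifs <;> linarith
lemma phiI_hi {x : ℝ} (h0 : 1/3 ≤ x) (h1 : x ≤ 1) : phi.symm x = (x+2)/3 := by
  rw [phi_symm_apply]; unfold phiG; split_ifs <;> linarith
lemma phiI_id_lo {x : ℝ} (h : x ≤ 0) : phi.symm x = x := by
  rw [phi_symm_apply]; unfold phiG; split_ifs <;> linarith
lemma phiI_id_hi {x : ℝ} (h : 1 ≤ x) : phi.symm x = x := by
  rw [phi_symm_apply]; unfold phiG; split_ifs <;> linarith

lemma psi_hi (y : ℝ) : psi (2/3 + y/3) = 2/3 + (phi y)/3 := by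
  rw [psi_apply]; unfold sigF sigG
  rw [show 3 * (2/3 + y/3) - 2 = y by ring, ← phi_apply]; ring
lemma psi_id_lo {x : ℝ} (h : x ≤ 2/3) : psi x = x := by
  rw [psi_apply]; unfold sigF sigG
  rw [show phiF (3*x-2) = 3*x-2 from by unfold phiF; split_ifs <;> linarith]; ring
lemma psi_id_hi {x : ℝ} (h : 1 ≤ x) : psi x = x := by
  rw [psi_apply]; unfold sigF sigG
  rw [show phiF (3*x-2) = 3*x-2 from by unfold phiF; split_ifs <;> linarith]; ring
lemma psiI_hi (y : ℝ) : psi.symm (2/3 + y/3) = 2/3 + (phi.symm y)/3 := by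
  rw [psi_symm_apply]; unfold sigF sigG
  rw [show 3 * (2/3 + y/3) - 2 = y by ring, ← phi_symm_apply]; ring
lemma psiI_id_lo {x : ℝ} (h : x ≤ 2/3) : psi.symm x = x := by
  rw [psi_symm_apply]; unfold sigF sigG
  rw [show phiG (3*x-2) = 3*x-2 from by unfold phiG; split_ifs <;> linarith]; ring
lemma psiI_id_hi {x : ℝ} (h : 1 ≤ x) : psi.symm x = x := by
  rw [psi_symm_apply]; unfold sigF sigG
  rw [show phiG (3*x-2) = 3*x-2 from by unfold phiG; split_ifs <;> linarith]; ring

def gg : ℝ ≃o ℝ := OrderIso.addRight 1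
lemma gg_apply (x : ℝ) : gg x = x + 1 := rfl
lemma gg_symm_apply (x : ℝ) : gg.symm x = x - 1 := by
  apply gg.injective; rw [gg.apply_symm_apply, gg_apply]; ring

def PsiOne : ℝ ≃o ℝ := (gg.symm.trans psi).trans gg
lemma PsiOne_apply (x : ℝ) : PsiOne x = psi (x - 1) + 1 := by
  show gg (psi (gg.symm x)) = _
  rw [gg_symm_apply, gg_apply]
lemma PsiOne_symm_apply (x : ℝ) : PsiOne.symm x = psi.symm (x - 1) + 1 := by
  apply PsiOne.injective
  rw [PsiOne.apply_symm_apply, PsiOne_apply, add_sub_cancel_right, psi.apply_symm_apply]; ring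

def ff : ℝ ≃o ℝ := phi.trans (PsiOne.trans gg)
lemma ff_apply (x : ℝ) : ff x = PsiOne (phi x) + 1 := rfl
lemma ff_symm_apply (x : ℝ) : ff.symm x = phi.symm (PsiOne.symm (x - 1)) := by
  apply ff.injective
  rw [ff.apply_symm_apply, ff_apply, phi.apply_symm_apply, PsiOne.apply_symm_apply]; ring


lemma geom_summable : Summable (fun n : ℕ => (2:ℝ)/3^(n+1)) := by
  have h : (fun n : ℕ => (2:ℝ)/3^(n+1)) = fun n : ℕ => (2/3) * (1/3)^n := by
    funext n; rw [pow_succ, div_pow, one_pow]; field_simp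
  rw [h]
  exact (summable_geometric_of_lt_one (by norm_num) (by norm_num)).mul_left _

lemma digit_le {a : ℕ → ℕ} (ha : ∀ n, a n = 0 ∨ a n = 2) (n : ℕ) :
    ((a n : ℝ)) / 3^(n+1) ≤ 2/3^(n+1) := by
  have h2 : (a n : ℝ) ≤ 2 := by rcases ha n with h | h <;> simp [h]
  gcongr

lemma digit_summable {a : ℕ → ℕ} (ha : ∀ n, a n = 0 ∨ a n = 2) :
    Summable (fun n => (a n : ℝ) / 3 ^ (n + 1)) :=
  Summable.of_nonneg_of_le (fun n => by positivity) (digit_le ha) geom_summable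

lemma two_tsum : ∑' n : ℕ, (2:ℝ) / 3 ^ (n+1) = 1 := by
  have h : (fun n : ℕ => (2:ℝ) / 3 ^ (n+1)) = fun n : ℕ => (2/3) * (1/3) ^ n := by
    funext n; rw [pow_succ, div_pow, one_pow]; field_simp
  rw [h, tsum_mul_left, tsum_geometric_of_lt_one (by norm_num) (by norm_num)]
  norm_num

lemma cantor_subset : cantorC ⊆ Icc (0:ℝ) 1 := by
  rintro x ⟨a, ha, rfl⟩
  refine ⟨tsum_nonneg (fun n => by positivity), ?_⟩
  rw [← two_tsum]
  exact Summable.tsum_le_tsum (digit_le ha) (digit_summable ha) geom_summable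

lemma zero_mem_cantor : (0:ℝ) ∈ cantorC := ⟨fun _ => 0, fun n => Or.inl rfl, by simp⟩

lemma shift_digits {a : ℕ → ℕ} (ha : ∀ n, a n = 0 ∨ a n = 2) {d : ℕ} (hd : d = 0 ∨ d = 2) :
    ∀ n, (fun n => Nat.casesOn n d a : ℕ → ℕ) n = 0 ∨ (fun n => Nat.casesOn n d a : ℕ → ℕ) n = 2 := by
  intro n; cases n with
  | zero => exact hd
  | succ k => exact ha k

lemma shift_tsum {a : ℕ → ℕ} (ha : ∀ n, a n = 0 ∨ a n = 2) {d : ℕ} (hd : d = 0 ∨ d = 2) :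
    ∑' n, ((fun n => Nat.casesOn n d a : ℕ → ℕ) n : ℝ) / 3^(n+1)
      = (d:ℝ)/3 + (∑' n, (a n : ℝ)/3^(n+1))/3 := by
  have hsum : Summable (fun n => ((fun n => Nat.casesOn n d a : ℕ → ℕ) n : ℝ)/3^(n+1)) :=
    digit_summable (shift_digits ha hd)
  rw [Summable.tsum_eq_zero_add hsum]
  have h1 : ∀ n : ℕ, ((fun n => Nat.casesOn n d a : ℕ → ℕ) (n+1) : ℝ)/3^(n+1+1)
      = ((a n : ℝ)/3^(n+1))/3 := by
    intro n; show (a n : ℝ)/3^(n+2) = _; rw [pow_succ]; ring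
  rw [tsum_congr h1, tsum_div_const]
  norm_num

lemma cantor_lo {y : ℝ} (hy : y ∈ cantorC) : y/3 ∈ cantorC := by
  obtain ⟨a, ha, rfl⟩ := hy
  exact ⟨fun n => Nat.casesOn n 0 a, shift_digits ha (Or.inl rfl),
    by rw [shift_tsum ha (Or.inl rfl)]; norm_num⟩

lemma cantor_hi {y : ℝ} (hy : y ∈ cantorC) : 2/3 + y/3 ∈ cantorC := by
  obtain ⟨a, ha, rfl⟩ := hy
  exact ⟨fun n => Nat.casesOn n 2 a, shift_digits ha (Or.inr rfl),
    by rw [shift_tsum ha (Or.inr rfl)]; norm_num⟩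

lemma cantor_cases {x : ℝ} (hx : x ∈ cantorC) :
    (∃ y ∈ cantorC, x = y/3) ∨ (∃ y ∈ cantorC, x = 2/3 + y/3) := by
  obtain ⟨a, ha, rfl⟩ := hx
  have hy : (∑' n, (a (n+1) : ℝ)/3^(n+1)) ∈ cantorC := ⟨fun n => a (n+1), fun n => ha _, rfl⟩
  have hsplit : ∑' n, (a n : ℝ)/3^(n+1)
      = (a 0 : ℝ)/3 + (∑' n, (a (n+1) : ℝ)/3^(n+1))/3 := by
    have hkey := shift_tsum (a := fun n => a (n+1)) (fun n => ha _) (ha 0)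
    have : (fun n => Nat.casesOn n (a 0) (fun k => a (k+1)) : ℕ → ℕ) = a := by
      funext n; cases n <;> rfl
    rw [this] at hkey
    exact hkey
  rcases ha 0 with h | h
  · left; exact ⟨_, hy, by rw [hsplit, h]; norm_num⟩
  · right; exact ⟨_, hy, by rw [hsplit, h]; norm_num⟩

lemma twothirds_mem : (2/3 : ℝ) ∈ cantorC := by
  have h : (2/3:ℝ) = 2/3 + 0/3 := by norm_num
  rw [h]; exact cantor_hi zero_mem_cantor

lemma mem01 {x : ℝ} (h : x ∈ cantorC) : 0 ≤ x ∧ x ≤ 1 :=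
  ⟨(cantor_subset h).1, (cantor_subset h).2⟩

lemma phi_mem {x : ℝ} (hx : x ∈ cantorC) : phi x ∈ cantorC := by
  rcases cantor_cases hx with ⟨y, hy, rfl⟩ | ⟨y, hy, rfl⟩
  · obtain ⟨h0, h1⟩ := mem01 hy
    rw [phi_lo (by linarith) (by linarith), show y/3/3 = (y/3)/3 by ring]
    exact cantor_lo (cantor_lo hy)
  · rcases cantor_cases hy with ⟨z, hz, rfl⟩ | ⟨z, hz, rfl⟩
    · obtain ⟨h0, h1⟩ := mem01 hz
      rw [phi_mid (by linarith) (by linarith), show 2/3 + z/3/3 - 4/9 = (2/3 + z/3)/3 by ring]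
      exact cantor_lo (cantor_hi hz)
    · obtain ⟨h0, h1⟩ := mem01 hz
      rw [phi_hi (by linarith) (by linarith),
        show 3*(2/3 + (2/3 + z/3)/3) - 2 = 2/3 + z/3 by ring]
      exact cantor_hi hz

lemma phiI_mem {x : ℝ} (hx : x ∈ cantorC) : phi.symm x ∈ cantorC := by
  rcases cantor_cases hx with ⟨y, hy, rfl⟩ | ⟨y, hy, rfl⟩
  · rcases cantor_cases hy with ⟨z, hz, rfl⟩ | ⟨z, hz, rfl⟩
    · obtain ⟨h0, h1⟩ := mem01 hz
      rw [phiI_lo (by linarith) (by linarith), show 3*(z/3/3) = z/3 by ring]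
      exact cantor_lo hz
    · obtain ⟨h0, h1⟩ := mem01 hz
      rw [phiI_mid (by linarith) (by linarith),
        show (2/3 + z/3)/3 + 4/9 = 2/3 + (z/3)/3 by ring]
      exact cantor_hi (cantor_lo hz)
  · obtain ⟨h0, h1⟩ := mem01 hy
    rw [phiI_hi (by linarith) (by linarith),
      show (2/3 + y/3 + 2)/3 = 2/3 + (2/3 + y/3)/3 by ring]
    exact cantor_hi (cantor_hi hy)

lemma psi_mem {x : ℝ} (hx : x ∈ cantorC) : psi x ∈ cantorC := by
  rcases cantor_cases hx with ⟨y, hy, rfl⟩ | ⟨y, hy, rfl⟩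
  · obtain ⟨h0, h1⟩ := mem01 hy
    rw [psi_id_lo (by linarith)]; exact cantor_lo hy
  · rw [psi_hi]; exact cantor_hi (phi_mem hy)

lemma psiI_mem {x : ℝ} (hx : x ∈ cantorC) : psi.symm x ∈ cantorC := by
  rcases cantor_cases hx with ⟨y, hy, rfl⟩ | ⟨y, hy, rfl⟩
  · obtain ⟨h0, h1⟩ := mem01 hy
    rw [psiI_id_lo (by linarith)]; exact cantor_lo hy
  · rw [psiI_hi]; exact cantor_hi (phiI_mem hy)

lemma CZ_mem_iff {x : ℝ} : x ∈ CZ ↔ ∃ n : ℤ, ∃ c ∈ cantorC, x = (n:ℝ) + c := by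
  simp only [CZ, mem_iUnion, mem_image]
  constructor
  · rintro ⟨n, c, hc, rfl⟩; exact ⟨n, c, hc, rfl⟩
  · rintro ⟨n, c, hc, rfl⟩; exact ⟨n, c, hc, rfl⟩

lemma gg_CZ {x : ℝ} (h : x ∈ CZ) : gg x ∈ CZ := by
  obtain ⟨n, c, hc, rfl⟩ := CZ_mem_iff.1 h
  exact CZ_mem_iff.2 ⟨n+1, c, hc, by rw [gg_apply]; push_cast; ring⟩

lemma ggI_CZ {x : ℝ} (h : x ∈ CZ) : gg.symm x ∈ CZ := by
  obtain ⟨n, c, hc, rfl⟩ := CZ_mem_iff.1 h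
  exact CZ_mem_iff.2 ⟨n-1, c, hc, by rw [gg_symm_apply]; push_cast; ring⟩

lemma local_CZ (T : ℝ ≃o ℝ) (hlo : ∀ x : ℝ, x ≤ 0 → T x = x) (hhi : ∀ x : ℝ, 1 ≤ x → T x = x)
    (hC : ∀ x ∈ cantorC, T x ∈ cantorC) {x : ℝ} (h : x ∈ CZ) : T x ∈ CZ := by
  obtain ⟨n, c, hc, rfl⟩ := CZ_mem_iff.1 h
  obtain ⟨h0, h1⟩ := mem01 hc
  rcases lt_trichotomy n 0 with hn | hn | hn
  · have : (n:ℝ) + c ≤ 0 := by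
      have : (n:ℝ) ≤ -1 := by exact_mod_cast Int.le_of_lt_add_one (by simpa using hn)
      linarith
    rw [hlo _ this]; exact CZ_mem_iff.2 ⟨n, c, hc, rfl⟩
  · subst hn
    rw [show ((0:ℤ):ℝ) + c = c by push_cast; ring]
    exact CZ_mem_iff.2 ⟨0, T c, hC c hc, by push_cast; ring⟩
  · have : (1:ℝ) ≤ (n:ℝ) + c := by
      have : (1:ℝ) ≤ (n:ℝ) := by exact_mod_cast hn
      linarith
    rw [hhi _ this]; exact CZ_mem_iff.2 ⟨n, c, hc, rfl⟩

lemma phi_CZ {x : ℝ} (h : x ∈ CZ) : phi x ∈ CZ :=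
  local_CZ phi (fun _ hx => phi_id_lo hx) (fun _ hx => phi_id_hi hx) (fun _ => phi_mem) h
lemma phiI_CZ {x : ℝ} (h : x ∈ CZ) : phi.symm x ∈ CZ :=
  local_CZ phi.symm (fun _ hx => phiI_id_lo hx) (fun _ hx => phiI_id_hi hx) (fun _ => phiI_mem) h
lemma psi_CZ {x : ℝ} (h : x ∈ CZ) : psi x ∈ CZ :=
  local_CZ psi (fun _ hx => psi_id_lo (by linarith)) (fun _ hx => psi_id_hi hx)
    (fun _ => psi_mem) h
lemma psiI_CZ {x : ℝ} (h : x ∈ CZ) : psi.symm x ∈ CZ :=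
  local_CZ psi.symm (fun _ hx => psiI_id_lo (by linarith)) (fun _ hx => psiI_id_hi hx)
    (fun _ => psiI_mem) h

lemma PsiOne_CZ {x : ℝ} (h : x ∈ CZ) : PsiOne x ∈ CZ := by
  rw [PsiOne_apply, show psi (x-1) + 1 = gg (psi (gg.symm x)) by rw [gg_apply, gg_symm_apply]]
  exact gg_CZ (psi_CZ (ggI_CZ h))
lemma PsiOneI_CZ {x : ℝ} (h : x ∈ CZ) : PsiOne.symm x ∈ CZ := by
  rw [PsiOne_symm_apply, show psi.symm (x-1) + 1 = gg (psi.symm (gg.symm x)) by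
    rw [gg_apply, gg_symm_apply]]
  exact gg_CZ (psiI_CZ (ggI_CZ h))

lemma ff_CZ {x : ℝ} (h : x ∈ CZ) : ff x ∈ CZ := by
  rw [ff_apply, show PsiOne (phi x) + 1 = gg (PsiOne (phi x)) from rfl]
  exact gg_CZ (PsiOne_CZ (phi_CZ h))
lemma ffI_CZ {x : ℝ} (h : x ∈ CZ) : ff.symm x ∈ CZ := by
  rw [ff_symm_apply, show x - 1 = gg.symm x by rw [gg_symm_apply]]
  exact phiI_CZ (PsiOneI_CZ (ggI_CZ h))

lemma ff_image_CZ : ⇑ff '' CZ = CZ := by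
  apply subset_antisymm
  · rintro _ ⟨x, hx, rfl⟩; exact ff_CZ hx
  · intro x hx
    exact ⟨ff.symm x, ffI_CZ hx, ff.apply_symm_apply x⟩

lemma int_lo_or_hi (m : ℤ) : ((m:ℝ) ≤ 0) ∨ (1 ≤ (m:ℝ)) := by
  rcases le_or_gt m 0 with h | h
  · left; exact_mod_cast h
  · right; exact_mod_cast h

lemma phi_int (m : ℤ) : phi (m:ℝ) = m := by
  rcases int_lo_or_hi m with h | h
  · exact phi_id_lo h
  · exact phi_id_hi h

lemma psi_int (m : ℤ) : psi (m:ℝ) = m := by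
  rcases int_lo_or_hi m with h | h
  · exact psi_id_lo (by linarith)
  · exact psi_id_hi h

lemma ff_int (m : ℤ) : ff (m:ℝ) = (m:ℝ) + 1 := by
  rw [ff_apply, phi_int, PsiOne_apply]
  rw [show (m:ℝ) - 1 = ((m - 1 : ℤ) : ℝ) by push_cast; ring, psi_int]
  push_cast; ring

lemma ff_Icc (n : ℤ) : ⇑ff '' Icc (n:ℝ) ((n:ℝ)+1) = Icc ((n:ℝ)+1) ((n:ℝ)+2) := by
  rw [OrderIso.image_Icc, ff_int, show (n:ℝ) + 1 = ((n+1:ℤ):ℝ) by push_cast; ring, ff_int]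
  push_cast
  congr 1 <;> ring

lemma gg_zpow (n : ℤ) : ∀ x : ℝ, (gg ^ n) x = x + n := by
  induction n using Int.induction_on with
  | zero => simp
  | succ k ih =>
    intro x
    rw [zpow_add_one, show ((gg ^ (k:ℤ)) * gg) x = (gg ^ (k:ℤ)) (gg x) from rfl, gg_apply,
      ih (x+1)]
    push_cast; ring
  | pred k ih =>
    intro x
    rw [zpow_sub_one, show ((gg ^ (-k:ℤ)) * gg⁻¹) x = (gg ^ (-k:ℤ)) (gg⁻¹ x) from rfl,
      show (gg⁻¹ : ℝ ≃o ℝ) x = gg.symm x from rfl, gg_symm_apply, ih (x-1)]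
    push_cast; ring

def val : List Bool → ℝ
  | [] => 0
  | (false :: t) => val t / 3
  | (true :: t) => 2/3 + val t / 3

lemma val_mem : ∀ l : List Bool, val l ∈ cantorC
  | [] => zero_mem_cantor
  | (false :: t) => cantor_lo (val_mem t)
  | (true :: t) => cantor_hi (val_mem t)

lemma val01 (l : List Bool) : 0 ≤ val l ∧ val l ≤ 1 := mem01 (val_mem l)

lemma val_allfalse : ∀ l : List Bool, true ∉ l → val l = 0
  | [], _ => rfl
  | (false :: t), h => by
    show val t / 3 = 0
    rw [val_allfalse t (fun ht => h (List.mem_cons_of_mem _ ht))]; norm_num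
  | (true :: t), h => absurd (List.mem_cons_self) h

lemma cantor_approx : ∀ (k : ℕ) (x : ℝ), x ∈ cantorC →
    ∃ l : List Bool, true ∈ l ∧ |x - val l| ≤ (1/3)^k := by
  intro k
  induction k with
  | zero =>
    intro x hx
    obtain ⟨h0, h1⟩ := mem01 hx
    refine ⟨[true], List.mem_cons_self, ?_⟩
    rw [show val [true] = 2/3 from by show 2/3 + val [] / 3 = 2/3; show 2/3 + 0/3 = 2/3; norm_num]
    rw [abs_le]; constructor <;> [linarith; linarith]
  | succ k ih =>
    intro x hx
    rcases cantor_cases hx with ⟨y, hy, rfl⟩ | ⟨y, hy, rfl⟩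
    · obtain ⟨l, hl, hd⟩ := ih y hy
      refine ⟨false :: l, List.mem_cons_of_mem _ hl, ?_⟩
      rw [show val (false :: l) = val l / 3 from rfl,
        show y/3 - val l/3 = (y - val l)/3 by ring, abs_div]
      rw [show |(3:ℝ)| = 3 from by norm_num, pow_succ]
      rw [div_le_iff₀ (by norm_num)]
      calc |y - val l| ≤ (1/3)^k := hd
        _ = (1/3)^k * (1/3) * 3 := by ring
    · obtain ⟨l, hl, hd⟩ := ih y hy
      refine ⟨true :: l, List.mem_cons_self, ?_⟩
      rw [show val (true :: l) = 2/3 + val l / 3 from rfl,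
        show 2/3 + y/3 - (2/3 + val l/3) = (y - val l)/3 by ring, abs_div]
      rw [show |(3:ℝ)| = 3 from by norm_num, pow_succ]
      rw [div_le_iff₀ (by norm_num)]
      calc |y - val l| ≤ (1/3)^k := hd
        _ = (1/3)^k * (1/3) * 3 := by ring

def Gc : Subgroup (ℝ ≃o ℝ) := Subgroup.closure {ff, gg}
def Hc : Subgroup (ℝ ≃o ℝ) := Subgroup.closure {phi, psi}

lemma ff_mem_Gc : ff ∈ Gc := Subgroup.subset_closure (mem_insert _ _)
lemma gg_mem_Gc : gg ∈ Gc := Subgroup.subset_closure (mem_insert_iff.2 (Or.inr rfl))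
lemma phi_mem_Hc : phi ∈ Hc := Subgroup.subset_closure (mem_insert _ _)
lemma psi_mem_Hc : psi ∈ Hc := Subgroup.subset_closure (mem_insert_iff.2 (Or.inr rfl))

lemma mono01 {h : ℝ ≃o ℝ} (h0 : h 0 = 0) (h1 : h 1 = 1) {x : ℝ} (hx : x ∈ Icc (0:ℝ) 1) :
    h x ∈ Icc (0:ℝ) 1 := by
  constructor
  · rw [← h0]; exact h.monotone hx.1
  · rw [← h1]; exact h.monotone hx.2

lemma symm01 {h : ℝ ≃o ℝ} (h0 : h 0 = 0) (h1 : h 1 = 1) {x : ℝ} (hx : x ∈ Icc (0:ℝ) 1) :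
    h.symm x ∈ Icc (0:ℝ) 1 := by
  constructor
  · rw [show (0:ℝ) = h.symm 0 from ((OrderIso.symm_apply_eq h).2 h0.symm).symm]
    exact h.symm.monotone hx.1
  · rw [show (1:ℝ) = h.symm 1 from ((OrderIso.symm_apply_eq h).2 h1.symm).symm]
    exact h.symm.monotone hx.2

lemma phi01 : phi 0 = 0 ∧ phi 1 = 1 := ⟨phi_id_lo le_rfl, phi_id_hi le_rfl⟩
lemma psi01 : psi 0 = 0 ∧ psi 1 = 1 := ⟨psi_id_lo (by norm_num), psi_id_hi le_rfl⟩

/-- Transfer: every element of `Hc` fixes 0 and 1, and agrees on `[0,1]` with some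
element of `Gc`. -/
lemma P_all : ∀ h ∈ Hc, h 0 = 0 ∧ h 1 = 1 ∧ ∃ h' ∈ Gc, ∀ x ∈ Icc (0:ℝ) 1, h' x = h x := by
  intro h hh
  induction hh using Subgroup.closure_induction with
  | mem u hu =>
    rcases hu with rfl | rfl
    · refine ⟨phi01.1, phi01.2, gg⁻¹ * ff, mul_mem (inv_mem gg_mem_Gc) ff_mem_Gc, ?_⟩
      intro x hx
      show gg.symm (ff x) = phi x
      rw [ff_apply, gg_symm_apply, add_sub_cancel_right, PsiOne_apply]
      have hp : phi x ∈ Icc (0:ℝ) 1 := mono01 phi01.1 phi01.2 hx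
      rw [psi_id_lo (by have := hp.2; linarith)]
      ring
    · refine ⟨psi01.1, psi01.2, gg⁻¹ * (gg⁻¹ * ff) * gg,
        mul_mem (mul_mem (inv_mem gg_mem_Gc) (mul_mem (inv_mem gg_mem_Gc) ff_mem_Gc))
          gg_mem_Gc, ?_⟩
      intro x hx
      show gg.symm (gg.symm (ff (gg x))) = psi x
      rw [gg_apply, ff_apply, phi_id_hi (by have := hx.1; linarith), PsiOne_apply,
        add_sub_cancel_right, gg_symm_apply, gg_symm_apply]
      ring
  | one => exact ⟨rfl, rfl, 1, one_mem _, fun x _ => rfl⟩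
  | mul u v hu hv ihu ihv =>
    obtain ⟨hu0, hu1, u', hu', hequ⟩ := ihu
    obtain ⟨hv0, hv1, v', hv', heqv⟩ := ihv
    refine ⟨?_, ?_, u' * v', mul_mem hu' hv', ?_⟩
    · show u (v 0) = 0; rw [hv0, hu0]
    · show u (v 1) = 1; rw [hv1, hu1]
    · intro x hx
      show u' (v' x) = u (v x)
      rw [heqv x hx, hequ _ (mono01 hv0 hv1 hx)]
  | inv u hu ihu =>
    obtain ⟨hu0, hu1, u', hu', hequ⟩ := ihu
    refine ⟨?_, ?_, u'⁻¹, inv_mem hu', ?_⟩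
    · exact (OrderIso.symm_apply_eq u).2 hu0.symm
    · exact (OrderIso.symm_apply_eq u).2 hu1.symm
    · intro x hx
      show u'.symm x = u.symm x
      have hs : u.symm x ∈ Icc (0:ℝ) 1 := symm01 hu0 hu1 hx
      have hx' : u' (u.symm x) = x := by rw [hequ _ hs, u.apply_symm_apply]
      calc u'.symm x = u'.symm (u' (u.symm x)) := by rw [hx']
        _ = u.symm x := u'.symm_apply_apply _

lemma Q_all : ∀ h ∈ Hc, ∃ h₂ ∈ Hc, ∀ y ∈ Icc (0:ℝ) 1,
    h₂ (2/3 + y/3) = 2/3 + (h y)/3 := by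
  intro h hh
  induction hh using Subgroup.closure_induction with
  | mem u hu =>
    rcases hu with rfl | rfl
    · exact ⟨psi, psi_mem_Hc, fun y _ => psi_hi y⟩
    · refine ⟨phi⁻¹ * psi * phi, mul_mem (mul_mem (inv_mem phi_mem_Hc) psi_mem_Hc)
        phi_mem_Hc, ?_⟩
      intro y hy
      obtain ⟨hy0, hy1⟩ := hy
      show phi.symm (psi (phi (2/3 + y/3))) = 2/3 + psi y/3
      rcases le_or_gt y (1/3) with h13 | h13
      · rw [phi_mid (by linarith) (by linarith),
          show 2/3 + y/3 - 4/9 = 2/9 + y/3 by ring,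
          psi_id_lo (by linarith), phiI_mid (by linarith) (by linarith),
          psi_id_lo (by linarith)]
        ring
      · rcases le_or_gt y (2/3) with h23 | h23
        · rw [phi_hi (by linarith) (by linarith),
            show 3*(2/3 + y/3) - 2 = y by ring,
            psi_id_lo (by linarith), phiI_hi (by linarith) (by linarith)]
          ring
        · have hz : (0:ℝ) ≤ 3*y - 2 ∧ 3*y - 2 ≤ 1 := ⟨by linarith, by linarith⟩
          have hw : phi (3*y-2) ∈ Icc (0:ℝ) 1 :=
            mono01 phi01.1 phi01.2 ⟨hz.1, hz.2⟩
          have hpsi : psi y = 2/3 + phi (3*y-2)/3 := by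
            conv_lhs => rw [show y = 2/3 + (3*y-2)/3 by ring]
            exact psi_hi _
          rw [phi_hi (by linarith) (by linarith),
            show 3*(2/3 + y/3) - 2 = y by ring, hpsi,
            phiI_hi (by have := hw.1; linarith) (by have := hw.2; linarith)]
          ring
  | one => exact ⟨1, one_mem _, fun y _ => by show (2:ℝ)/3 + y/3 = 2/3 + y/3; rfl⟩
  | mul u v hu hv ihu ihv =>
    obtain ⟨u2, hu2, hequ⟩ := ihu
    obtain ⟨v2, hv2, heqv⟩ := ihv
    have hv01 := P_all v hv
    refine ⟨u2 * v2, mul_mem hu2 hv2, ?_⟩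
    intro y hy
    show u2 (v2 (2/3 + y/3)) = 2/3 + u (v y)/3
    rw [heqv y hy, hequ _ (mono01 hv01.1 hv01.2.1 hy)]
  | inv u hu ihu =>
    obtain ⟨u2, hu2, hequ⟩ := ihu
    have hu01 := P_all u hu
    refine ⟨u2⁻¹, inv_mem hu2, ?_⟩
    intro y hy
    show u2.symm (2/3 + y/3) = 2/3 + u.symm y/3
    have hs : u.symm y ∈ Icc (0:ℝ) 1 := symm01 hu01.1 hu01.2.1 hy
    have hx' : u2 (2/3 + u.symm y/3) = 2/3 + y/3 := by
      rw [hequ _ hs, u.apply_symm_apply]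
    calc u2.symm (2/3 + y/3) = u2.symm (u2 (2/3 + u.symm y/3)) := by rw [hx']
      _ = 2/3 + u.symm y/3 := u2.symm_apply_apply _

lemma val_cons_false (t : List Bool) : val (false :: t) = val t / 3 := rfl
lemma val_cons_true (t : List Bool) : val (true :: t) = 2/3 + val t / 3 := rfl

lemma reduce_aux : ∀ N : ℕ, ∀ l : List Bool, l.length ≤ N → true ∈ l →
    ∃ h ∈ Hc, h (val l) = 2/3 := by
  intro N
  induction N with
  | zero =>
    intro l hlen hl
    rw [List.eq_nil_of_length_eq_zero (Nat.le_zero.1 hlen)] at hl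
    simp at hl
  | succ N ih =>
    intro l hlen hl
    match l with
    | [] => simp at hl
    | true :: t =>
      by_cases ht : true ∈ t
      · obtain ⟨h, hhH, hval⟩ := ih t (by simpa using Nat.le_of_succ_le_succ hlen) ht
        obtain ⟨h₂, hh₂, heq⟩ := Q_all h hhH
        refine ⟨phi * h₂, mul_mem phi_mem_Hc hh₂, ?_⟩
        show phi (h₂ (val (true :: t))) = 2/3
        rw [val_cons_true, heq (val t) ⟨(val01 t).1, (val01 t).2⟩, hval,
          phi_hi (by norm_num) (by norm_num)]
        norm_num
      · refine ⟨1, one_mem _, ?_⟩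
        show val (true :: t) = 2/3
        rw [val_cons_true, val_allfalse t ht]
        norm_num
    | false :: t =>
      have ht : true ∈ t := by simpa using hl
      match t with
      | false :: t' =>
        obtain ⟨h, hhH, hval⟩ := ih (false :: t')
          (by simpa using Nat.le_of_succ_le_succ hlen) ht
        refine ⟨h * phi⁻¹, mul_mem hhH (inv_mem phi_mem_Hc), ?_⟩
        show h (phi.symm (val (false :: false :: t'))) = 2/3
        have h01 := val01 t'
        rw [val_cons_false, val_cons_false,
          phiI_lo (by linarith) (by linarith),
          show 3 * (val t'/3/3) = val t'/3 by ring, ← val_cons_false, hval]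
      | true :: t' =>
        have h01 := val01 t'
        have hmid : phi.symm (val (false :: true :: t')) = 2/3 + (val t'/3)/3 := by
          rw [val_cons_false, val_cons_true,
            phiI_mid (by linarith) (by linarith)]
          ring
        by_cases ht' : true ∈ t'
        · obtain ⟨h, hhH, hval⟩ := ih (false :: t')
            (by simpa using Nat.le_of_succ_le_succ hlen) (by simpa using ht')
          obtain ⟨h₂, hh₂, heq⟩ := Q_all h hhH
          refine ⟨phi * h₂ * phi⁻¹,
            mul_mem (mul_mem phi_mem_Hc hh₂) (inv_mem phi_mem_Hc), ?_⟩
          show phi (h₂ (phi.symm (val (false :: true :: t')))) = 2/3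
          rw [hmid, heq (val t'/3) ⟨by linarith, by linarith⟩,
            ← val_cons_false, hval, phi_hi (by norm_num) (by norm_num)]
          norm_num
        · refine ⟨phi⁻¹, inv_mem phi_mem_Hc, ?_⟩
          show phi.symm (val (false :: true :: t')) = 2/3
          rw [hmid, val_allfalse t' ht']
          norm_num

lemma reach : ∀ l : List Bool, true ∈ l → ∃ h' ∈ Gc, h' (2/3) = val l := by
  intro l hl
  obtain ⟨h, hhH, hval⟩ := reduce_aux l.length l le_rfl hl
  obtain ⟨h0, h1, h', hh', heq⟩ := P_all h⁻¹ (inv_mem hhH)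
  refine ⟨h', hh', ?_⟩
  rw [heq (2/3) ⟨by norm_num, by norm_num⟩]
  show h.symm (2/3) = val l
  rw [← hval, h.symm_apply_apply]

lemma orbit_int : ∀ h ∈ Gc, (∀ m : ℤ, ∃ k : ℤ, h (m:ℝ) = (k:ℝ)) ∧
    (∀ m : ℤ, ∃ k : ℤ, h (k:ℝ) = (m:ℝ)) := by
  intro h hh
  induction hh using Subgroup.closure_induction with
  | mem u hu =>
    rcases hu with rfl | rfl
    · exact ⟨fun m => ⟨m+1, by rw [ff_int]; push_cast; ring⟩,
        fun m => ⟨m-1, by rw [ff_int]; push_cast; ring⟩⟩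
    · exact ⟨fun m => ⟨m+1, by rw [gg_apply]; push_cast; ring⟩,
        fun m => ⟨m-1, by rw [gg_apply]; push_cast; ring⟩⟩
  | one => exact ⟨fun m => ⟨m, rfl⟩, fun m => ⟨m, rfl⟩⟩
  | mul u v hu hv ihu ihv =>
    refine ⟨fun m => ?_, fun m => ?_⟩
    · obtain ⟨k, hk⟩ := ihv.1 m
      obtain ⟨k', hk'⟩ := ihu.1 k
      exact ⟨k', by show u (v m) = k'; rw [hk, hk']⟩
    · obtain ⟨k, hk⟩ := ihu.2 m
      obtain ⟨k', hk'⟩ := ihv.2 k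
      exact ⟨k', by show u (v k') = m; rw [hk', hk]⟩
  | inv u hu ihu =>
    refine ⟨fun m => ?_, fun m => ?_⟩
    · obtain ⟨k, hk⟩ := ihu.2 m
      exact ⟨k, by show u.symm m = k; rw [← hk, u.symm_apply_apply]⟩
    · obtain ⟨k, hk⟩ := ihu.1 m
      exact ⟨k, by show u.symm k = m; rw [← hk, u.symm_apply_apply]⟩

lemma CZ_pres : ∀ h ∈ Gc, (∀ x ∈ CZ, h x ∈ CZ) ∧ (∀ x ∈ CZ, h.symm x ∈ CZ) := by
  intro h hh
  induction hh using Subgroup.closure_induction with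
  | mem u hu =>
    rcases hu with rfl | rfl
    · exact ⟨fun _ => ff_CZ, fun _ => ffI_CZ⟩
    · exact ⟨fun _ => gg_CZ, fun _ => ggI_CZ⟩
  | one => exact ⟨fun _ h => h, fun _ h => h⟩
  | mul u v hu hv ihu ihv =>
    refine ⟨fun x hx => ?_, fun x hx => ?_⟩
    · show u (v x) ∈ CZ
      exact ihu.1 _ (ihv.1 _ hx)
    · show v.symm (u.symm x) ∈ CZ
      exact ihv.2 _ (ihu.2 _ hx)
  | inv u hu ihu =>
    exact ⟨fun x hx => ihu.2 x hx, fun x hx => ihu.1 x hx⟩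

lemma twothirds_CZ : (2/3 : ℝ) ∈ CZ :=
  CZ_mem_iff.2 ⟨0, 2/3, twothirds_mem, by push_cast; ring⟩


/-- With `g` the translation `t ↦ t + 1`, there is an increasing
homeomorphism `f` of `ℝ` preserving `C = ⋃ₙ (n + C₀)` with `f([n,n+1]) = [n+1,n+2]` for all
`n`, such that for the group `G` generated by `f` and `g`, the orbit of `0` is `ℤ` and some
`x₀ ∈ C₀ ∖ ℤ` has orbit dense in `C`. -/
theorem stmt11 : ∃ f : ℝ ≃o ℝ,
    ⇑f '' CZ = CZ ∧
    (∀ n : ℤ, ⇑f '' Set.Icc (n : ℝ) ((n : ℝ) + 1) = Set.Icc ((n : ℝ) + 1) ((n : ℝ) + 2)) ∧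
    ∀ G : Subgroup (ℝ ≃o ℝ), G = Subgroup.closure {f, OrderIso.addRight (1 : ℝ)} →
      orbitR G 0 = Set.range ((↑) : ℤ → ℝ) ∧
      ∃ x₀ ∈ cantorC, x₀ ∉ Set.range ((↑) : ℤ → ℝ) ∧
        orbitR G x₀ ⊆ CZ ∧ CZ ⊆ closure (orbitR G x₀) := by
  refine ⟨ff, ff_image_CZ, ff_Icc, ?_⟩
  intro G hG
  have hGc : G = Gc := hG
  constructor
  · apply subset_antisymm
    · rintro y ⟨h, hhG, rfl⟩
      rw [hGc] at hhG
      obtain ⟨k, hk⟩ := (orbit_int h hhG).1 0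
      rw [show ((0:ℤ):ℝ) = (0:ℝ) by norm_num] at hk
      exact ⟨k, hk.symm⟩
    · rintro _ ⟨k, rfl⟩
      refine ⟨gg^k, by rw [hGc]; exact zpow_mem gg_mem_Gc k, ?_⟩
      rw [gg_zpow]; ring
  · refine ⟨2/3, twothirds_mem, ?_, ?_, ?_⟩
    · rintro ⟨k, hk⟩
      have h1 : (0:ℝ) < (k:ℝ) := by rw [hk]; norm_num
      have h2 : (k:ℝ) < 1 := by rw [hk]; norm_num
      have h1' : 0 < k := by exact_mod_cast h1
      have h2' : k < 1 := by exact_mod_cast h2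
      omega
    · rintro y ⟨h, hhG, rfl⟩
      rw [hGc] at hhG
      exact (CZ_pres h hhG).1 _ twothirds_CZ
    · intro z hz
      obtain ⟨n, c, hc, rfl⟩ := CZ_mem_iff.1 hz
      rw [Metric.mem_closure_iff]
      intro ε hε
      obtain ⟨k, hk⟩ := exists_pow_lt_of_lt_one hε (show (1/3:ℝ) < 1 by norm_num)
      obtain ⟨l, hl, hdist⟩ := cantor_approx k c hc
      obtain ⟨h', hh', hval⟩ := reach l hl
      refine ⟨(gg^n * h') (2/3), ⟨gg^n * h',
        by rw [hGc]; exact mul_mem (zpow_mem gg_mem_Gc n) hh', rfl⟩, ?_⟩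
      have hv : (gg^n * h') (2/3 : ℝ) = val l + n := by
        show (gg^n) (h' (2/3)) = _
        rw [hval, gg_zpow]
      rw [hv, Real.dist_eq, show (n:ℝ) + c - (val l + (n:ℝ)) = c - val l by ring]
      exact lt_of_le_of_lt hdist hk

end
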